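/- For any K-dimensional positive definite Hermitian complex matrix N, letting N₁ be the diagonal matrix of its diagonal entries, one has log det(I + N) − log det(N) ≥ log det(I + N₁) − log det(N₁). -/

import Mathlib

open Matrix Finset
open scoped ComplexOrder

private lemma psd_diag_nonneg {n : Type*} [Fintype n] [DecidableEq n]
    {M : Matrix n n ℂ} (hM : M.PosSemidef) (k : n) : 0 ≤ M k k := by
  set v : n → ℂ := Pi.single k 1 with hv
  have h := hM.dotProduct_mulVec_nonneg v
  have hs : star v = v := by
    ext i; simp [hv, Pi.single_apply, apply_ite]
  rw [hs, hv, Matrix.mulVec_single_one] at h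
  simpa [single_dotProduct] using h

private lemma pd_diag_pos {n : Type*} [Fintype n] [DecidableEq n]
    {M : Matrix n n ℂ} (hM : M.PosDef) (k : n) : 0 < M k k := by
  set v : n → ℂ := Pi.single k 1 with hv
  have h := hM.dotProduct_mulVec_pos (x := v) (fun h => (one_ne_zero : (1:ℂ) ≠ 0) (by simpa [hv] using congrFun h k))
  have hs : star v = v := by
    ext i; simp [hv, Pi.single_apply, apply_ite]
  rw [hs, hv, Matrix.mulVec_single_one] at h
  simpa [single_dotProduct] using h

private lemma pd_submatrix {m n : Type*} [Fintype m] [Fintype n] [DecidableEq m] [DecidableEq n]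
    {M : Matrix n n ℂ} (hM : M.PosDef) (e : m ≃ n) : (M.submatrix e e).PosDef := by
  refine Matrix.PosDef.of_dotProduct_mulVec_pos (hM.1.submatrix e) (fun x hx => ?_)
  have hx' : (x ∘ e.symm) ≠ 0 := by
    intro h
    apply hx
    ext i
    simpa using congrFun h (e i)
  have h := hM.dotProduct_mulVec_pos hx'
  have hst : star (x ∘ e.symm) = star x ∘ e.symm := rfl
  rw [hst, comp_equiv_symm_dotProduct] at h
  rwa [Matrix.submatrix_mulVec_equiv]

private lemma key : ∀ (n : ℕ) (N : Matrix (Fin n) (Fin n) ℂ), N.PosDef →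
    N.det * ∏ k, (1 + N k k) ≤ (1 + N).det * ∏ k, N k k := by
  intro n
  induction n with
  | zero =>
    intro N _
    simp [Matrix.det_isEmpty]
  | succ n ih =>
    intro N hN
    set e : Fin 1 ⊕ Fin n ≃ Fin (n + 1) :=
      finSumFinEquiv.trans (finCongr (Nat.add_comm 1 n)) with he
    set P : Matrix (Fin 1 ⊕ Fin n) (Fin 1 ⊕ Fin n) ℂ := N.submatrix e e with hPdef
    have hP : P.PosDef := pd_submatrix hN e
    set A := P.toBlocks₁₁ with hA
    set B := P.toBlocks₁₂ with hB
    set D := P.toBlocks₂₂ with hD'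
    have hC : P.toBlocks₂₁ = Bᴴ := by
      ext j i
      exact (congrFun (congrFun hP.1 (Sum.inr j)) (Sum.inl i)).symm
    have hPB : P = fromBlocks A B Bᴴ D := by
      rw [← hC, hA, hB, hD']
      exact (fromBlocks_toBlocks P).symm
    have hD : D.PosDef := by
      refine Matrix.PosDef.of_dotProduct_mulVec_pos (hP.1.submatrix Sum.inr) (fun x hx => ?_)
      have hx' : (Sum.elim (0 : Fin 1 → ℂ) x) ≠ 0 := by
        intro h
        apply hx
        funext i
        have h2 := congrFun h (Sum.inr i : Fin 1 ⊕ Fin n)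
        simpa using h2
      have h := hP.dotProduct_mulVec_pos hx'
      have hst : star (Sum.elim (0 : Fin 1 → ℂ) x) = Sum.elim (0 : Fin 1 → ℂ) (star x) := by
        ext i; cases i <;> simp
      rw [hst, hPB] at h
      simpa [Matrix.fromBlocks_mulVec, sumElim_dotProduct_sumElim] using h
    haveI : Invertible D := hD.isUnit.invertible
    have h1D : (1 + D).PosDef := Matrix.PosDef.one.add_posSemidef hD.posSemidef
    haveI : Invertible (1 + D) := h1D.isUnit.invertible
    set a := A 0 0 with ha'
    set s := (B * D⁻¹ * Bᴴ) 0 0 with hs'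
    set t := (B * (1 + D)⁻¹ * Bᴴ) 0 0 with ht'
    have ha : 0 < a := pd_diag_pos hP (Sum.inl 0)
    have hs0 : 0 ≤ s := psd_diag_nonneg (hD.inv.posSemidef.mul_mul_conjTranspose_same B) 0
    -- t ≤ s
    have hdiff : D⁻¹ - (1 + D)⁻¹ = D⁻¹ * (1 + D)⁻¹ := by
      calc D⁻¹ - (1 + D)⁻¹
          = D⁻¹ * ((1 + D) * (1 + D)⁻¹) - 1 * (1 + D)⁻¹ := by
            rw [Matrix.mul_inv_of_invertible, Matrix.mul_one, Matrix.one_mul]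
        _ = (D⁻¹ * (1 + D) - 1) * (1 + D)⁻¹ := by
            rw [Matrix.sub_mul, Matrix.mul_assoc]
        _ = D⁻¹ * (1 + D)⁻¹ := by
            rw [Matrix.mul_add, Matrix.mul_one, Matrix.inv_mul_of_invertible,
              add_sub_cancel_right]
    have hpsd : (D⁻¹ * (1 + D)⁻¹).PosSemidef := by
      rw [← Matrix.mul_inv_rev]
      have h2 : ((1 + D) * D).PosDef := by
        have h3 : (1 + D) * D = D + D * D := by rw [Matrix.add_mul, Matrix.one_mul]
        rw [h3]
        refine hD.add_posSemidef ?_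
        have h4 : D * D = Dᴴ * D := by rw [hD.1.eq]
        rw [h4]
        exact posSemidef_conjTranspose_mul_self D
      exact h2.inv.posSemidef
    have hts : t ≤ s := by
      have hkey := psd_diag_nonneg (hpsd.mul_mul_conjTranspose_same B) 0
      have heq : B * (D⁻¹ * (1 + D)⁻¹) * Bᴴ = B * D⁻¹ * Bᴴ - B * (1 + D)⁻¹ * Bᴴ := by
        rw [← hdiff, Matrix.mul_sub, Matrix.sub_mul]
      rw [heq] at hkey
      rw [← sub_nonneg]
      simpa [Matrix.sub_apply] using hkey
    -- 0 ≤ a - s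
    have hge : 0 ≤ a - s := by
      have hSchur : (A - B * D⁻¹ * Bᴴ).PosSemidef :=
        (Matrix.PosDef.fromBlocks₂₂ A B hD).mp (hPB ▸ hP.posSemidef)
      simpa [Matrix.sub_apply] using psd_diag_nonneg hSchur 0
    -- determinant formulas
    have hdetP : N.det = D.det * (a - s) := by
      calc N.det = P.det := (Matrix.det_submatrix_equiv_self e N).symm
        _ = D.det * (A - B * ⅟D * Bᴴ).det := by rw [hPB, Matrix.det_fromBlocks₂₂]
        _ = D.det * (a - s) := by
            rw [Matrix.invOf_eq_nonsing_inv, Matrix.det_fin_one]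
            simp [Matrix.sub_apply]
            exact Or.inl rfl
    have h1PB : 1 + P = fromBlocks (1 + A) B Bᴴ (1 + D) := by
      rw [hPB, ← fromBlocks_one, fromBlocks_add]
      simp
    have hdet1 : (1 + N).det = (1 + D).det * (1 + a - t) := by
      have hsub : (1 + N).submatrix ⇑e ⇑e = 1 + P := by
        ext i j
        simp [Matrix.submatrix_apply, Matrix.add_apply, Matrix.one_apply,
          EmbeddingLike.apply_eq_iff_eq, hPdef]
      calc (1 + N).det = (1 + P).det := by
            rw [← hsub, Matrix.det_submatrix_equiv_self]
        _ = (1 + D).det * ((1 + A) - B * ⅟(1 + D) * Bᴴ).det := by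
            rw [h1PB, Matrix.det_fromBlocks₂₂]
        _ = (1 + D).det * (1 + a - t) := by
            rw [Matrix.invOf_eq_nonsing_inv, Matrix.det_fin_one]
            simp [Matrix.sub_apply, Matrix.add_apply, Matrix.one_apply_eq]
            exact Or.inl rfl
    -- product formulas
    have hprod : ∏ k, N k k = a * ∏ i, D i i := by
      rw [← Equiv.prod_comp e (fun k => N k k), Fintype.prod_sum_type]
      congr 1
      exact Fin.prod_univ_one _
    have hprod1 : ∏ k, (1 + N k k) = (1 + a) * ∏ i, (1 + D i i) := by
      rw [← Equiv.prod_comp e (fun k => 1 + N k k), Fintype.prod_sum_type]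
      congr 1
      exact Fin.prod_univ_one _
    -- positivity of the factors
    have hprodD : (0:ℂ) ≤ ∏ i, D i i :=
      Finset.prod_nonneg (fun i _ => (pd_diag_pos hD i).le)
    have hb : (0:ℂ) ≤ (1 + D).det * ∏ i, D i i := mul_nonneg h1D.det_pos.le hprodD
    have hc : (0:ℂ) ≤ (a - s) * (1 + a) :=
      mul_nonneg hge (by positivity)
    -- scalar inequality
    have hscal : (a - s) * (1 + a) ≤ (1 + a - t) * a := by
      rw [← sub_nonneg]
      have : (1 + a - t) * a - (a - s) * (1 + a) = s + a * (s - t) := by ring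
      rw [this]
      exact add_nonneg hs0 (mul_nonneg ha.le (sub_nonneg.mpr hts))
    rw [hdetP, hdet1, hprod, hprod1]
    calc D.det * (a - s) * ((1 + a) * ∏ i, (1 + D i i))
        = (D.det * ∏ i, (1 + D i i)) * ((a - s) * (1 + a)) := by ring
      _ ≤ ((1 + D).det * ∏ i, D i i) * ((1 + a - t) * a) :=
          mul_le_mul (ih D hD) hscal hc hb
      _ = (1 + D).det * (1 + a - t) * (a * ∏ i, D i i) := by ring

private lemma cpos {z : ℂ} (h : 0 < z) : 0 < z.re ∧ z.im = 0 := by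
  rw [Complex.lt_def] at h
  exact ⟨by simpa using h.1, by simpa using h.2.symm⟩

/-- For any `K`-dimensional positive definite Hermitian complex matrix `N`, letting `N₁` be the
diagonal matrix of its diagonal entries,
`log det(I + N) − log det(N) ≥ log det(I + N₁) − log det(N₁)`. -/
theorem logdet_ratio_ge_diagonal {K : ℕ} (N : Matrix (Fin K) (Fin K) ℂ)
    (hN : N.PosDef) :
    Real.log ((1 + Matrix.diagonal (fun k => N k k)).det).re -
      Real.log ((Matrix.diagonal (fun k => N k k)).det).re ≤
    Real.log ((1 + N).det).re - Real.log (N.det).re := by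
  have hkey := key K N hN
  have hq : (1 + Matrix.diagonal (fun k => N k k)).det = ∏ k, (1 + N k k) := by
    rw [← Matrix.diagonal_one, Matrix.diagonal_add, Matrix.det_diagonal]
  have hp : (Matrix.diagonal (fun k => N k k)).det = ∏ k, N k k := Matrix.det_diagonal
  have hx : (0:ℂ) < N.det := hN.det_pos
  have hy : (0:ℂ) < (1 + N).det := (Matrix.PosDef.one.add_posSemidef hN.posSemidef).det_pos
  have hfk : ∀ k, (0:ℂ) < N k k := fun k => pd_diag_pos hN k
  have hp0 : (0:ℂ) < ∏ k, N k k := Finset.prod_pos (fun k _ => hfk k)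
  have hq0 : (0:ℂ) < ∏ k, (1 + N k k) := Finset.prod_pos (fun k _ => by
    have := hfk k; positivity)
  obtain ⟨hxr, hxi⟩ := cpos hx
  obtain ⟨hyr, hyi⟩ := cpos hy
  obtain ⟨hpr, hpi⟩ := cpos hp0
  obtain ⟨hqr, hqi⟩ := cpos hq0
  have hmul := (Complex.le_def.mp hkey).1
  have h1 : (N.det * ∏ k, (1 + N k k)).re = N.det.re * (∏ k, (1 + N k k)).re := by
    rw [Complex.mul_re, hxi, hqi]; ring
  have h2 : ((1 + N).det * ∏ k, N k k).re = ((1 + N).det).re * (∏ k, N k k).re := by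
    rw [Complex.mul_re, hyi, hpi]; ring
  rw [h1, h2] at hmul
  have hlog := Real.log_le_log (by positivity) hmul
  rw [Real.log_mul hxr.ne' hqr.ne', Real.log_mul hyr.ne' hpr.ne'] at hlog
  rw [hq, hp]
  linarith
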